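/- The matrix equation X - AXB = C over a field has a solution X if and only if there exist nonsingular matrices S and R such that [[A, C], [0, I]]·R = S·[[A, 0], [0, I]] and [[I, 0], [0, B]]·R = S·[[I, 0], [0, B]]. -/

import Mathlib

open Matrix Submodule LinearMap Module

namespace WimmerProof

variable {F : Type*} [Field F] {m n : ℕ}

/-- The linear map whose kernel is the space Ω(K) of (not necessarily invertible)
pairs (S, R) intertwining the two pencils. -/
def LK (A : Matrix (Fin m) (Fin m) F) (B : Matrix (Fin n) (Fin n) F)
    (K : Matrix (Fin m) (Fin n) F) :
    (Matrix (Fin m ⊕ Fin n) (Fin m ⊕ Fin n) F × Matrix (Fin m ⊕ Fin n) (Fin m ⊕ Fin n) F) →ₗ[F]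
    (Matrix (Fin m ⊕ Fin n) (Fin m ⊕ Fin n) F × Matrix (Fin m ⊕ Fin n) (Fin m ⊕ Fin n) F) where
  toFun SR := (fromBlocks A K 0 1 * SR.2 - SR.1 * fromBlocks A 0 0 1,
    fromBlocks 1 0 0 B * SR.2 - SR.1 * fromBlocks 1 0 0 B)
  map_add' x y := by
    simp only [Prod.fst_add, Prod.snd_add, Matrix.mul_add, Matrix.add_mul, Prod.mk_add_mk]
    refine Prod.ext ?_ ?_ <;> abel
  map_smul' c x := by
    simp [Matrix.mul_smul, Matrix.smul_mul, smul_sub]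

lemma mem_omega {A : Matrix (Fin m) (Fin m) F} {B : Matrix (Fin n) (Fin n) F}
    {K : Matrix (Fin m) (Fin n) F}
    {S R : Matrix (Fin m ⊕ Fin n) (Fin m ⊕ Fin n) F} :
    (S, R) ∈ ker (LK A B K) ↔
      fromBlocks A K 0 1 * R = S * fromBlocks A 0 0 1 ∧
      fromBlocks 1 0 0 B * R = S * fromBlocks 1 0 0 B := by
  simp [LK, LinearMap.mem_ker, Prod.ext_iff, sub_eq_zero]

/-- Projection to the pair of blocks (R₂₁, S₂₂). -/
def qhat : (Matrix (Fin m ⊕ Fin n) (Fin m ⊕ Fin n) F × Matrix (Fin m ⊕ Fin n) (Fin m ⊕ Fin n) F)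
    →ₗ[F] (Matrix (Fin n) (Fin m) F × Matrix (Fin n) (Fin n) F) where
  toFun SR := (SR.2.toBlocks₂₁, SR.1.toBlocks₂₂)
  map_add' x y := by
    refine Prod.ext ?_ ?_ <;> ext i j <;> rfl
  map_smul' c x := by
    refine Prod.ext ?_ ?_ <;> ext i j <;> rfl

/-- The map whose kernel is the target space W. -/
def wmap (A : Matrix (Fin m) (Fin m) F) (B : Matrix (Fin n) (Fin n) F) :
    (Matrix (Fin n) (Fin m) F × Matrix (Fin n) (Fin n) F) →ₗ[F]
    (Matrix (Fin n) (Fin m) F × Matrix (Fin n) (Fin n) F) where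
  toFun PT := (PT.1 - B * PT.1 * A, B * PT.2 - PT.2 * B)
  map_add' x y := by
    simp only [Prod.fst_add, Prod.snd_add, Matrix.mul_add, Matrix.add_mul, Prod.mk_add_mk]
    refine Prod.ext ?_ ?_ <;> abel
  map_smul' c x := by
    simp [Matrix.mul_smul, Matrix.smul_mul, smul_sub]

lemma mem_wker {A : Matrix (Fin m) (Fin m) F} {B : Matrix (Fin n) (Fin n) F}
    {P : Matrix (Fin n) (Fin m) F} {T : Matrix (Fin n) (Fin n) F} :
    (P, T) ∈ ker (wmap A B) ↔ P = B * P * A ∧ B * T = T * B := by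
  simp [wmap, LinearMap.mem_ker, Prod.ext_iff, sub_eq_zero]

/-- Block identities satisfied by members of Ω(K). -/
lemma omega_spec {A : Matrix (Fin m) (Fin m) F} {B : Matrix (Fin n) (Fin n) F}
    {K : Matrix (Fin m) (Fin n) F}
    {S R : Matrix (Fin m ⊕ Fin n) (Fin m ⊕ Fin n) F}
    (h : (S, R) ∈ ker (LK A B K)) :
    A * R.toBlocks₁₁ + K * R.toBlocks₂₁ = S.toBlocks₁₁ * A ∧
    A * R.toBlocks₁₂ + K * R.toBlocks₂₂ = S.toBlocks₁₂ ∧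
    R.toBlocks₂₁ = S.toBlocks₂₁ * A ∧
    R.toBlocks₂₂ = S.toBlocks₂₂ ∧
    R.toBlocks₁₁ = S.toBlocks₁₁ ∧
    R.toBlocks₁₂ = S.toBlocks₁₂ * B ∧
    B * R.toBlocks₂₁ = S.toBlocks₂₁ ∧
    B * R.toBlocks₂₂ = S.toBlocks₂₂ * B := by
  obtain ⟨h1, h2⟩ := mem_omega.mp h
  rw [← fromBlocks_toBlocks S, ← fromBlocks_toBlocks R] at h1 h2
  simp only [fromBlocks_multiply, fromBlocks_inj, toBlocks_fromBlocks₁₁, toBlocks_fromBlocks₁₂,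
    toBlocks_fromBlocks₂₁, toBlocks_fromBlocks₂₂, Matrix.zero_mul, Matrix.mul_zero,
    Matrix.one_mul, Matrix.mul_one, add_zero, zero_add] at h1 h2
  exact ⟨h1.1, h1.2.1, h1.2.2.1, h1.2.2.2, h2.1, h2.2.1, h2.2.2.1, h2.2.2.2⟩

lemma map_qhat_le (A : Matrix (Fin m) (Fin m) F) (B : Matrix (Fin n) (Fin n) F)
    (K : Matrix (Fin m) (Fin n) F) :
    Submodule.map qhat (ker (LK A B K)) ≤ ker (wmap A B) := by
  rintro x ⟨⟨S, R⟩, hm, rfl⟩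
  obtain ⟨_, _, e3, e4, _, _, e7, e8⟩ := omega_spec hm
  show (R.toBlocks₂₁, S.toBlocks₂₂) ∈ ker (wmap A B)
  rw [mem_wker]
  constructor
  · rw [← e7] at e3; exact e3
  · rw [← e4]; rw [e8, e4]
    
lemma map_qhat_zero (A : Matrix (Fin m) (Fin m) F) (B : Matrix (Fin n) (Fin n) F) :
    Submodule.map qhat (ker (LK A B 0)) = ker (wmap A B) := by
  refine le_antisymm (map_qhat_le A B 0) ?_
  rintro ⟨P, T⟩ h
  rw [mem_wker] at h
  obtain ⟨hP, hT⟩ := h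
  refine ⟨(fromBlocks 0 0 (B * P) T, fromBlocks 0 0 P T), mem_omega.mpr ⟨?_, ?_⟩, ?_⟩
  · rw [fromBlocks_multiply, fromBlocks_multiply, fromBlocks_inj]
    exact ⟨by simp, by simp, by simpa using hP, by simp⟩
  · rw [fromBlocks_multiply, fromBlocks_multiply, fromBlocks_inj]
    exact ⟨by simp, by simp, by simp, by simpa using hT⟩
  · show ((fromBlocks 0 0 P T).toBlocks₂₁, (fromBlocks 0 0 (B*P) T).toBlocks₂₂) = (P, T)
    rw [toBlocks_fromBlocks₂₁, toBlocks_fromBlocks₂₂]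

lemma m_mul_eq (A : Matrix (Fin m) (Fin m) F) {K K' : Matrix (Fin m) (Fin n) F}
    {R : Matrix (Fin m ⊕ Fin n) (Fin m ⊕ Fin n) F}
    (h21 : R.toBlocks₂₁ = 0) (h22 : R.toBlocks₂₂ = 0) :
    (fromBlocks A K 0 1 : Matrix (Fin m ⊕ Fin n) (Fin m ⊕ Fin n) F) * R
      = fromBlocks A K' 0 1 * R := by
  conv_lhs => rw [← fromBlocks_toBlocks R]
  conv_rhs => rw [← fromBlocks_toBlocks R]
  rw [fromBlocks_multiply, fromBlocks_multiply, h21, h22]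
  simp

lemma mem_qhat_ker {S R : Matrix (Fin m ⊕ Fin n) (Fin m ⊕ Fin n) F} :
    (S, R) ∈ ker (qhat (F := F) (m := m) (n := n)) ↔
      R.toBlocks₂₁ = 0 ∧ S.toBlocks₂₂ = 0 := by
  simp [qhat, LinearMap.mem_ker, Prod.ext_iff]

lemma inf_ker_eq (A : Matrix (Fin m) (Fin m) F) (B : Matrix (Fin n) (Fin n) F)
    (C : Matrix (Fin m) (Fin n) F) :
    ker (LK A B C) ⊓ ker qhat = ker (LK A B 0) ⊓ ker qhat := by
  ext x
  obtain ⟨S, R⟩ := x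
  simp only [Submodule.mem_inf]
  constructor
  · rintro ⟨hm, hq⟩
    obtain ⟨h21, h22s⟩ := mem_qhat_ker.mp hq
    have h22 : R.toBlocks₂₂ = 0 := by
      rw [(omega_spec hm).2.2.2.1, h22s]
    obtain ⟨e1, e2⟩ := mem_omega.mp hm
    exact ⟨mem_omega.mpr ⟨(m_mul_eq A h21 h22).symm.trans e1, e2⟩, hq⟩
  · rintro ⟨hm, hq⟩
    obtain ⟨h21, h22s⟩ := mem_qhat_ker.mp hq
    have h22 : R.toBlocks₂₂ = 0 := by
      rw [(omega_spec hm).2.2.2.1, h22s]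
    obtain ⟨e1, e2⟩ := mem_omega.mp hm
    exact ⟨mem_omega.mpr ⟨(m_mul_eq A h21 h22).symm.trans e1, e2⟩, hq⟩

/-- Rank-nullity for the restriction of a linear map to a submodule. -/
lemma rank_aux {V W : Type*} [AddCommGroup V] [Module F V] [AddCommGroup W] [Module F W]
    [FiniteDimensional F V] (f : V →ₗ[F] W) (p : Submodule F V) :
    finrank F (p.map f) + finrank F (p ⊓ ker f : Submodule F V) = finrank F p := by
  have h := LinearMap.finrank_range_add_finrank_ker (f.domRestrict p)
  rw [LinearMap.range_domRestrict, LinearMap.ker_domRestrict] at h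
  have hc : (ker f).comap p.subtype = (p ⊓ ker f).comap p.subtype := by
    rw [Submodule.comap_inf, Submodule.comap_subtype_self, top_inf_eq]
  rw [hc, LinearEquiv.finrank_eq (Submodule.comapSubtypeEquivOfLe
    (inf_le_left : p ⊓ ker f ≤ p))] at h
  exact h


/-- Left multiplication by a pair of invertible matrices, as a linear equivalence. -/
noncomputable def mulEquiv {α : Type*} [Fintype α] [DecidableEq α] (S0 R0 : Matrix α α F)
    (hS : IsUnit S0) (hR : IsUnit R0) :
    (Matrix α α F × Matrix α α F) ≃ₗ[F] (Matrix α α F × Matrix α α F) :=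
  LinearEquiv.ofLinear
    ((LinearMap.mulLeft F S0).prodMap (LinearMap.mulLeft F R0))
    ((LinearMap.mulLeft F (↑hS.unit⁻¹ : Matrix α α F)).prodMap
      (LinearMap.mulLeft F (↑hR.unit⁻¹ : Matrix α α F)))
    (by
      ext x <;> simp [LinearMap.mulLeft_apply, ← Matrix.mul_assoc,
        Matrix.mul_nonsing_inv _ ((Matrix.isUnit_iff_isUnit_det _).mp hS),
        Matrix.mul_nonsing_inv _ ((Matrix.isUnit_iff_isUnit_det _).mp hR)])
    (by
      ext x <;> simp [LinearMap.mulLeft_apply, ← Matrix.mul_assoc,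
        Matrix.nonsing_inv_mul _ ((Matrix.isUnit_iff_isUnit_det _).mp hS),
        Matrix.nonsing_inv_mul _ ((Matrix.isUnit_iff_isUnit_det _).mp hR)])

lemma conj_eq {α : Type*} [Monoid α] {M N S0 R0 u v : α} (h : M * R0 = S0 * N)
    (hv : R0 * v = 1) (hu : u * S0 = 1) : N * v = u * M := by
  calc N * v = ((u * S0) * N) * v := by rw [hu, one_mul]
    _ = (u * (M * R0)) * v := by rw [mul_assoc u S0 N, ← h]
    _ = (u * M) * (R0 * v) := by rw [← mul_assoc u M R0, mul_assoc]
    _ = u * M := by rw [hv, mul_one]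

lemma map_mulEquiv (A : Matrix (Fin m) (Fin m) F) (B : Matrix (Fin n) (Fin n) F)
    (C : Matrix (Fin m) (Fin n) F)
    {S0 R0 : Matrix (Fin m ⊕ Fin n) (Fin m ⊕ Fin n) F} (hS : IsUnit S0) (hR : IsUnit R0)
    (h1 : fromBlocks A C 0 1 * R0 = S0 * fromBlocks A 0 0 1)
    (h2 : fromBlocks 1 0 0 B * R0 = S0 * fromBlocks 1 0 0 B) :
    Submodule.map (mulEquiv S0 R0 hS hR).toLinearMap (ker (LK A B 0)) = ker (LK A B C) := by
  have hv : R0 * (↑hR.unit⁻¹ : Matrix (Fin m ⊕ Fin n) (Fin m ⊕ Fin n) F) = 1 := hR.mul_val_inv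
  have hu : (↑hS.unit⁻¹ : Matrix (Fin m ⊕ Fin n) (Fin m ⊕ Fin n) F) * S0 = 1 := hS.val_inv_mul
  apply le_antisymm
  · rintro x ⟨⟨S', R'⟩, hx, rfl⟩
    obtain ⟨g1, g2⟩ := mem_omega.mp hx
    show (S0 * S', R0 * R') ∈ ker (LK A B C)
    refine mem_omega.mpr ⟨?_, ?_⟩
    · rw [← Matrix.mul_assoc, h1, Matrix.mul_assoc, g1, ← Matrix.mul_assoc]
    · rw [← Matrix.mul_assoc, h2, Matrix.mul_assoc, g2, ← Matrix.mul_assoc]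
  · rintro ⟨S, R⟩ hx
    obtain ⟨g1, g2⟩ := mem_omega.mp hx
    refine ⟨((↑hS.unit⁻¹ : Matrix (Fin m ⊕ Fin n) (Fin m ⊕ Fin n) F) * S,
      (↑hR.unit⁻¹ : Matrix (Fin m ⊕ Fin n) (Fin m ⊕ Fin n) F) * R), mem_omega.mpr ⟨?_, ?_⟩, ?_⟩
    · have key := conj_eq h1 hv hu
      rw [← Matrix.mul_assoc, key, Matrix.mul_assoc, g1, ← Matrix.mul_assoc]
    · have key := conj_eq h2 hv hu
      rw [← Matrix.mul_assoc, key, Matrix.mul_assoc, g2, ← Matrix.mul_assoc]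
    · have hS' : S0 * ((↑hS.unit⁻¹ : Matrix (Fin m ⊕ Fin n) (Fin m ⊕ Fin n) F) * S) = S := by
        rw [← Matrix.mul_assoc, hS.mul_val_inv, Matrix.one_mul]
      have hR' : R0 * ((↑hR.unit⁻¹ : Matrix (Fin m ⊕ Fin n) (Fin m ⊕ Fin n) F) * R) = R := by
        rw [← Matrix.mul_assoc, hR.mul_val_inv, Matrix.one_mul]
      show (S0 * ((↑hS.unit⁻¹ : Matrix (Fin m ⊕ Fin n) (Fin m ⊕ Fin n) F) * S),
        R0 * ((↑hR.unit⁻¹ : Matrix (Fin m ⊕ Fin n) (Fin m ⊕ Fin n) F) * R)) = (S, R)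
      rw [hS', hR']

end WimmerProof

open WimmerProof in
theorem wimmer_criterion {F : Type*} [Field F] {m n : ℕ}
    (A : Matrix (Fin m) (Fin m) F) (B : Matrix (Fin n) (Fin n) F)
    (C : Matrix (Fin m) (Fin n) F) :
    (∃ X : Matrix (Fin m) (Fin n) F, X - A * X * B = C) ↔
    (∃ S R : Matrix (Fin m ⊕ Fin n) (Fin m ⊕ Fin n) F, IsUnit S ∧ IsUnit R ∧
      fromBlocks A C 0 1 * R = S * fromBlocks A 0 0 1 ∧
      fromBlocks 1 0 0 B * R = S * fromBlocks 1 0 0 B) := by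
  constructor
  · rintro ⟨X, hX⟩
    refine ⟨fromBlocks 1 X 0 1, fromBlocks 1 (X * B) 0 1, ?_, ?_, ?_, ?_⟩
    · refine ⟨⟨fromBlocks 1 X 0 1, fromBlocks 1 (-X) 0 1, ?_, ?_⟩, rfl⟩ <;>
        · rw [fromBlocks_multiply, ← fromBlocks_one]; congr 1 <;> simp
    · refine ⟨⟨fromBlocks 1 (X * B) 0 1, fromBlocks 1 (-(X * B)) 0 1, ?_, ?_⟩, rfl⟩ <;>
        · rw [fromBlocks_multiply, ← fromBlocks_one]; congr 1 <;> simp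
    · rw [fromBlocks_multiply, fromBlocks_multiply, fromBlocks_inj]
      refine ⟨by simp, ?_, by simp, by simp⟩
      simp only [Matrix.mul_one, Matrix.one_mul, Matrix.zero_mul, Matrix.mul_zero, add_zero,
        zero_add]
      rw [← Matrix.mul_assoc, ← hX]
      abel
    · rw [fromBlocks_multiply, fromBlocks_multiply, fromBlocks_inj]
      exact ⟨by simp, by simp, by simp, by simp⟩
  · rintro ⟨S0, R0, hS, hR, h1, h2⟩
    have hmapeq := map_mulEquiv A B C hS hR h1 h2
    have hfr : finrank F ↥(ker (LK A B C)) = finrank F ↥(ker (LK A B 0)) := by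
      rw [← hmapeq]
      exact LinearEquiv.finrank_map_eq _ _
    have a1 := rank_aux (qhat (F := F) (m := m) (n := n)) (ker (LK A B C))
    have a2 := rank_aux (qhat (F := F) (m := m) (n := n)) (ker (LK A B 0))
    rw [map_qhat_zero] at a2
    rw [inf_ker_eq A B C] at a1
    have hfr2 : finrank F ↥(Submodule.map qhat (ker (LK A B C)))
        = finrank F ↥(ker (wmap A B)) := by omega
    have hmapW : Submodule.map qhat (ker (LK A B C)) = ker (wmap A B) :=
      Submodule.eq_of_le_of_finrank_eq (map_qhat_le A B C) hfr2
    have h01 : ((0 : Matrix (Fin n) (Fin m) F), (1 : Matrix (Fin n) (Fin n) F))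
        ∈ ker (wmap A B) := mem_wker.mpr ⟨by simp, by simp⟩
    rw [← hmapW] at h01
    obtain ⟨⟨S, R⟩, hm, hq⟩ := h01
    have hq1 : R.toBlocks₂₁ = 0 := congrArg Prod.fst hq
    have hq2 : S.toBlocks₂₂ = 1 := congrArg Prod.snd hq
    obtain ⟨e1, e2, e3, e4, e5, e6, e7, e8⟩ := omega_spec hm
    refine ⟨S.toBlocks₁₂, ?_⟩
    rw [e4, hq2, Matrix.mul_one] at e2
    rw [e6, ← Matrix.mul_assoc] at e2
    rw [sub_eq_iff_eq_add, add_comm]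
    exact e2.symm
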